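/- Define recursively $q_{n+1}(z) = q_n(z) \cdot q_0(z^{\deg q_n + 1})$ with $q_0(z) = \frac{1}{4}(z^5-z^4+z^2-z)$. Then for every $n \in \mathbb{N}$: $|q_n|_1 = 1$, $q_n(1) = q_n(0) = q_n(-1) = 0$, and $\sup_{z \in \overline{\mathbb{D}}} |q_n(z)| \le \left(\sup_{z \in \overline{\mathbb{D}}} |q_0(z)|\right)^{n+1}$. -/

import Mathlib

open Polynomial Finset

noncomputable def q0P : Polynomial ℂ :=
  Polynomial.C (1 / 4) * (X ^ 5 - X ^ 4 + X ^ 2 - X)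

/-- The sum of the absolute values of the coefficients of a polynomial. -/
noncomputable def l1 (f : Polynomial ℂ) : ℝ := ∑ k ∈ f.support, ‖f.coeff k‖

lemma l1_nonneg (f : Polynomial ℂ) : 0 ≤ l1 f :=
  Finset.sum_nonneg fun _ _ => (norm_nonneg _)

lemma l1_eq_sum_range (f : Polynomial ℂ) (n : ℕ) (h : f.natDegree < n) :
    l1 f = ∑ k ∈ range n, ‖f.coeff k‖ := by
  refine Finset.sum_subset (f.supp_subset_range h) fun k _ hk => ?_
  simp [notMem_support_iff.mp hk]

lemma l1_neg (f : Polynomial ℂ) : l1 (-f) = l1 f := by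
  unfold l1
  rw [support_neg]
  exact Finset.sum_congr rfl fun k _ => by simp

lemma l1_add_of_disjoint {f g : Polynomial ℂ} (h : Disjoint f.support g.support) :
    l1 (f + g) = l1 f + l1 g := by
  have hsupp : (f + g).support = f.support ∪ g.support := by
    ext k
    simp only [mem_support_iff, coeff_add, Finset.mem_union]
    constructor
    · intro hk
      by_contra hc
      push_neg at hc
      simp [hc.1, hc.2] at hk
    · intro hk
      rcases hk with hk | hk
      · have : g.coeff k = 0 := notMem_support_iff.mp (Finset.disjoint_left.mp h (mem_support_iff.mpr hk))
        simpa [this]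
      · have : f.coeff k = 0 := notMem_support_iff.mp (Finset.disjoint_right.mp h (mem_support_iff.mpr hk))
        simpa [this]
  unfold l1
  rw [hsupp, Finset.sum_union h]
  congr 1
  · refine Finset.sum_congr rfl fun k hk => ?_
    have : g.coeff k = 0 := notMem_support_iff.mp (Finset.disjoint_left.mp h hk)
    simp [this]
  · refine Finset.sum_congr rfl fun k hk => ?_
    have : f.coeff k = 0 := notMem_support_iff.mp (Finset.disjoint_right.mp h hk)
    simp [this]

lemma support_mul_X_pow (f : Polynomial ℂ) (j : ℕ) :
    (f * X ^ j).support = f.support.map ⟨(· + j), add_left_injective j⟩ := by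
  ext n
  simp only [mem_support_iff, Finset.mem_map, Function.Embedding.coeFn_mk,
    coeff_mul_X_pow']
  constructor
  · intro hn
    by_cases hj : j ≤ n
    · exact ⟨n - j, by simpa [hj] using hn, by omega⟩
    · simp [hj] at hn
  · rintro ⟨k, hk, rfl⟩
    simpa [Nat.le_add_left, mem_support_iff] using hk

lemma l1_mul_X_pow (f : Polynomial ℂ) (j : ℕ) : l1 (f * X ^ j) = l1 f := by
  unfold l1
  rw [support_mul_X_pow, Finset.sum_map]
  refine Finset.sum_congr rfl fun k hk => ?_
  simp [coeff_mul_X_pow']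

lemma l1_C_mul (c : ℂ) (f : Polynomial ℂ) : l1 (C c * f) = ‖c‖ * l1 f := by
  by_cases hc : c = 0
  · simp [hc, l1]
  · have hsupp : (C c * f).support = f.support := by
      ext k
      simp [mem_support_iff, coeff_C_mul, hc]
    unfold l1
    rw [hsupp, Finset.mul_sum]
    exact Finset.sum_congr rfl fun k _ => by simp [coeff_C_mul]

lemma mem_support_mul_X_pow {f : Polynomial ℂ} {j k : ℕ} (h : k ∈ (f * X ^ j).support) :
    j ≤ k ∧ k ≤ j + f.natDegree := by
  rw [support_mul_X_pow] at h
  obtain ⟨i, hi, hik⟩ := Finset.mem_map.mp h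
  simp only [Function.Embedding.coeFn_mk] at hik
  subst hik
  exact ⟨by omega, by have := le_natDegree_of_mem_supp _ hi; omega⟩

lemma disjoint_blocks {f : Polynomial ℂ} {m a b : ℕ} (hm : f.natDegree < m) (hab : a < b) :
    Disjoint (f * X ^ (a * m)).support (f * X ^ (b * m)).support := by
  rw [Finset.disjoint_left]
  intro k hka hkb
  obtain ⟨h1, h2⟩ := mem_support_mul_X_pow hka
  obtain ⟨h3, h4⟩ := mem_support_mul_X_pow hkb
  have : (a + 1) * m ≤ b * m := Nat.mul_le_mul_right m hab
  nlinarith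

lemma q0P_natDegree : q0P.natDegree = 5 := by
  rw [q0P, natDegree_C_mul (by norm_num)]
  compute_degree!

lemma q0P_l1 : l1 q0P = 1 := by
  rw [l1_eq_sum_range q0P 6 (by rw [q0P_natDegree]; norm_num)]
  simp [q0P, Finset.sum_range_succ, coeff_X_pow, coeff_X]
  norm_num [Complex.norm_def, Complex.normSq]

lemma q0P_eval_one : q0P.eval 1 = 0 := by simp [q0P]
lemma q0P_eval_zero : q0P.eval 0 = 0 := by simp [q0P]
lemma q0P_eval_neg_one : q0P.eval (-1) = 0 := by
  simp [q0P]
  ring_nf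

lemma key (f : Polynomial ℂ) {m : ℕ} (hm : f.natDegree < m) :
    l1 (f * q0P.comp (X ^ m)) = l1 f := by
  have hsum : f * q0P.comp (X ^ m) =
      C (1/4 : ℂ) * (f * X ^ (5*m) + (-(f * X ^ (4*m)) + (f * X ^ (2*m) + -(f * X ^ (1*m))))) := by
    simp only [q0P, mul_comp, C_comp, sub_comp, add_comp, pow_comp, X_comp, ← pow_mul]
    ring
  have d54 := disjoint_blocks (f := f) hm (show 4 < 5 by norm_num)
  have d52 := disjoint_blocks (f := f) hm (show 2 < 5 by norm_num)
  have d51 := disjoint_blocks (f := f) hm (show 1 < 5 by norm_num)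
  have d42 := disjoint_blocks (f := f) hm (show 2 < 4 by norm_num)
  have d41 := disjoint_blocks (f := f) hm (show 1 < 4 by norm_num)
  have d21 := disjoint_blocks (f := f) hm (show 1 < 2 by norm_num)
  rw [hsum, l1_C_mul]
  rw [l1_add_of_disjoint ?h1, l1_add_of_disjoint ?h2, l1_add_of_disjoint ?h3]
  case h3 => rw [support_neg]; exact d21.symm
  case h2 =>
    rw [support_neg]
    refine Finset.disjoint_left.mpr fun k hk hk' => ?_
    have := support_add (p := f * X ^ (2*m)) (q := -(f * X ^ (1*m))) hk'
    rw [Finset.mem_union, support_neg] at this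
    rcases this with h | h
    · exact Finset.disjoint_left.mp d42.symm hk h
    · exact Finset.disjoint_left.mp d41.symm hk h
  case h1 =>
    refine Finset.disjoint_left.mpr fun k hk hk' => ?_
    have := support_add (p := -(f * X ^ (4*m))) (q := f * X ^ (2*m) + -(f * X ^ (1*m))) hk'
    rw [Finset.mem_union, support_neg] at this
    rcases this with h | h
    · exact Finset.disjoint_left.mp d54.symm hk h
    · have := support_add (p := f * X ^ (2*m)) (q := -(f * X ^ (1*m))) h
      rw [Finset.mem_union, support_neg] at this
      rcases this with h | h
      · exact Finset.disjoint_left.mp d52.symm hk h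
      · exact Finset.disjoint_left.mp d51.symm hk h
  rw [l1_neg, l1_neg]
  simp only [l1_mul_X_pow]
  norm_num [Complex.norm_def, Complex.normSq]
  ring

lemma bddAbove_range_abs_eval (p : Polynomial ℂ) :
    BddAbove (Set.range fun z : Metric.closedBall (0 : ℂ) 1 => ‖p.eval (z : ℂ)‖) := by
  have h : (Set.range fun z : Metric.closedBall (0 : ℂ) 1 => ‖p.eval (z : ℂ)‖) =
      (fun z => ‖p.eval (z : ℂ)‖) '' (Metric.closedBall (0 : ℂ) 1) := by
    exact (Set.image_eq_range (fun z : ℂ => ‖p.eval (z : ℂ)‖) (Metric.closedBall 0 1)).symm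
  rw [h]
  exact (isCompact_closedBall _ _).bddAbove_image
    ((continuous_norm.comp (Polynomial.continuous p)).continuousOn)

lemma S_nonneg (p : Polynomial ℂ) :
    0 ≤ ⨆ z : Metric.closedBall (0 : ℂ) 1, ‖p.eval (z : ℂ)‖ :=
  le_trans (norm_nonneg _)
    (le_ciSup (bddAbove_range_abs_eval p) (⟨0, by simp⟩ : Metric.closedBall (0 : ℂ) 1))

lemma le_S (p : Polynomial ℂ) {z : ℂ} (hz : z ∈ Metric.closedBall (0 : ℂ) 1) :
    ‖p.eval (z : ℂ)‖ ≤ ⨆ z : Metric.closedBall (0 : ℂ) 1, ‖p.eval (z : ℂ)‖ :=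
  le_ciSup (bddAbove_range_abs_eval p) (⟨z, hz⟩ : Metric.closedBall (0 : ℂ) 1)

theorem stmt_5 (q : ℕ → Polynomial ℂ) (h0 : q 0 = q0P)
    (hrec : ∀ n, q (n + 1) = q n * q0P.comp (X ^ ((q n).natDegree + 1))) :
    ∀ n : ℕ, l1 (q n) = 1 ∧
      (q n).eval 1 = 0 ∧ (q n).eval 0 = 0 ∧ (q n).eval (-1) = 0 ∧
      (⨆ z : Metric.closedBall (0 : ℂ) 1, ‖(q n).eval (z : ℂ)‖) ≤
        (⨆ z : Metric.closedBall (0 : ℂ) 1, ‖q0P.eval (z : ℂ)‖) ^ (n + 1) := by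
  set M := ⨆ z : Metric.closedBall (0 : ℂ) 1, ‖q0P.eval (z : ℂ)‖ with hM
  haveI : Nonempty (Metric.closedBall (0 : ℂ) 1) := ⟨⟨0, by simp⟩⟩
  intro n
  induction n with
  | zero =>
    refine ⟨by rw [h0, q0P_l1], by rw [h0, q0P_eval_one], by rw [h0, q0P_eval_zero],
      by rw [h0, q0P_eval_neg_one], ?_⟩
    rw [h0, pow_one]
  | succ n ih =>
    obtain ⟨hl1, he1, he0, hen, hsup⟩ := ih
    have hm : (q n).natDegree < (q n).natDegree + 1 := Nat.lt_succ_self _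
    refine ⟨?_, ?_, ?_, ?_, ?_⟩
    · rw [hrec n, key _ hm, hl1]
    · simp [hrec n, eval_mul, he1]
    · simp [hrec n, eval_mul, he0]
    · simp [hrec n, eval_mul, hen]
    · refine ciSup_le fun z => ?_
      obtain ⟨z, hz⟩ := z
      rw [hrec n]
      simp only [eval_mul, eval_comp, eval_pow, eval_X, norm_mul]
      have hzm : z ^ ((q n).natDegree + 1) ∈ Metric.closedBall (0 : ℂ) 1 := by
        simp only [Metric.mem_closedBall, dist_zero_right, norm_pow] at hz ⊢
        exact pow_le_one₀ (norm_nonneg z) hz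
      calc ‖(q n).eval z‖ * ‖q0P.eval (z ^ ((q n).natDegree + 1))‖
          ≤ M ^ (n + 1) * M := by
            refine mul_le_mul (le_trans (le_S _ hz) hsup) (le_S _ hzm)
              (norm_nonneg _) (pow_nonneg (S_nonneg q0P) _)
        _ = M ^ (n + 1 + 1) := by ring
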